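/- Let y_1,…,y_n : (0,∞) → ℝ be strictly increasing, let φ : ℝ → (0,∞) be a positive function, and let G : (0,∞)^n → ℝ satisfy the fixed-point identity G(β) = ∑_{i=1}^n y_i(β_i · φ(G(β))) for every β ∈ (0,∞)^n. Assume in addition: (i) for every β ∈ (0,∞)^n and every t > G(β) there exists ζ ∈ (0,∞)^n with ζ_i > β_i for all i and G(ζ) = t; and (ii) for every β ∈ (0,∞)^n and every t ≤ G(β) there exists ζ ∈ (0,∞)^n with ζ_i ≤ β_i for all i and G(ζ) = t. Then for every t_0 ∈ ℝ, the sets S_1 := {β ∈ (0,∞)^n : G(β) ≥ t_0} and S_2 := {β ∈ (0,∞)^n : t_0 ≤ ∑_{i=1}^n y_i(β_i · φ(t_0))} are equal. -/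
import Mathlib


/-- The superlevel set `S₁ = {β : G β ≥ t₀}` of the fixed-point function `G`
coincides with the set `S₂ = {β : t₀ ≤ ∑ i, y i (β i * φ t₀)}`. -/
theorem stmt_2 (n : ℕ) (y : Fin n → ℝ → ℝ)
    (hy : ∀ i, StrictMonoOn (y i) (Set.Ioi 0))
    (φ : ℝ → ℝ) (hφ : ∀ t, 0 < φ t)
    (G : (Fin n → ℝ) → ℝ)
    (hfix : ∀ β : Fin n → ℝ, (∀ i, 0 < β i) → G β = ∑ i, y i (β i * φ (G β)))
    (hup : ∀ β : Fin n → ℝ, (∀ i, 0 < β i) → ∀ t > G β,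
      ∃ ζ : Fin n → ℝ, (∀ i, 0 < ζ i) ∧ (∀ i, β i < ζ i) ∧ G ζ = t)
    (hdown : ∀ β : Fin n → ℝ, (∀ i, 0 < β i) → ∀ t ≤ G β,
      ∃ ζ : Fin n → ℝ, (∀ i, 0 < ζ i) ∧ (∀ i, ζ i ≤ β i) ∧ G ζ = t)
    (t₀ : ℝ) :
    {β : Fin n → ℝ | (∀ i, 0 < β i) ∧ t₀ ≤ G β} =
      {β : Fin n → ℝ | (∀ i, 0 < β i) ∧ t₀ ≤ ∑ i, y i (β i * φ t₀)} := by
  ext β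
  simp only [Set.mem_setOf_eq]
  constructor
  · rintro ⟨hβ, ht⟩
    refine ⟨hβ, ?_⟩
    obtain ⟨ζ, hζpos, hζle, hζG⟩ := hdown β hβ t₀ ht
    have h := hfix ζ hζpos
    rw [hζG] at h
    refine h.le.trans (Finset.sum_le_sum fun i _ => ?_)
    exact (hy i).monotoneOn (mul_pos (hζpos i) (hφ t₀)) (mul_pos (hβ i) (hφ t₀))
      (mul_le_mul_of_nonneg_right (hζle i) (hφ t₀).le)
  · rintro ⟨hβ, ht⟩
    refine ⟨hβ, ?_⟩
    by_contra hlt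
    push_neg at hlt
    obtain ⟨ζ, hζpos, hζgt, hζG⟩ := hup β hβ t₀ hlt
    rcases Nat.eq_zero_or_pos n with hn | hn
    · subst hn
      have h0 : G β = 0 := by simpa using hfix β hβ
      simp only [Finset.univ_eq_empty, Finset.sum_empty] at ht
      exact absurd (ht.trans_lt (h0 ▸ hlt)) (lt_irrefl _)
    · have : Nonempty (Fin n) := ⟨⟨0, hn⟩⟩
      have hsum : ∑ i, y i (β i * φ t₀) < ∑ i, y i (ζ i * φ t₀) := by
        refine Finset.sum_lt_sum_of_nonempty Finset.univ_nonempty fun i _ => ?_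
        exact (hy i) (mul_pos (hβ i) (hφ t₀)) (mul_pos (hζpos i) (hφ t₀))
          (mul_lt_mul_of_pos_right (hζgt i) (hφ t₀))
      have h := hfix ζ hζpos
      rw [hζG] at h
      exact absurd (ht.trans_lt hsum) (h ▸ lt_irrefl _)
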